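/- Let K be a division ring, Q a finite quiver, and sigma : Q_1 -> Aut(K). Define R = K^{Q_0} and let M = K^{Q_1} be the R-R-bimodule with left action (lambda_v)(mu_a) = (lambda_{h(a)} mu_a) and right action (mu_a)(eta_v) = (mu_a sigma_a(eta_{t(a)})). Then the semilinear path algebra K_sigma Q is isomorphic as a K-ring to the tensor ring T_R(M) = ⊕_{n≥0} M^{⊗_R n}, via the map sending a path a_1...a_n to the corresponding pure tensor of indicator elements. -/

import Mathlib

attribute [local instance] Classical.propDecidable

/-- A quiver: vertices, arrows, head and tail maps. -/
structure Quiv where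
  V : Type
  A : Type
  h : A → V
  t : A → V

/-- A (possibly empty) list of arrows is a path when consecutive arrows compose:
`t aᵢ = h aᵢ₊₁` (paths are written right-to-left as in the paper). -/
def Quiv.IsPath (Q : Quiv) (p : List Q.A) : Prop :=
  p.Chain' (fun x y => Q.t x = Q.h y)

/-- A locally gentle pair `(Q,Z)`: `Z` is a set of length-2 paths (pairs `(b,a)` with
`t b = h a`), every vertex is head (resp. tail) of at most two arrows, and each arrow
extends in at most one way inside `Z` and at most one way outside `Z` on each side. -/
structure LocallyGentle (Q : Quiv) (Z : Set (Q.A × Q.A)) : Prop where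
  comp : ∀ p ∈ Z, Q.t p.1 = Q.h p.2
  head_two : ∀ (v : Q.V) (a b c : Q.A),
    Q.h a = v → Q.h b = v → Q.h c = v → a = b ∨ a = c ∨ b = c
  tail_two : ∀ (v : Q.V) (a b c : Q.A),
    Q.t a = v → Q.t b = v → Q.t c = v → a = b ∨ a = c ∨ b = c
  rel_right : ∀ b a a' : Q.A, (b, a) ∈ Z → (b, a') ∈ Z → a = a'
  adm_right : ∀ b a a' : Q.A, Q.t b = Q.h a → Q.t b = Q.h a' →
    (b, a) ∉ Z → (b, a') ∉ Z → a = a'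
  rel_left : ∀ b c c' : Q.A, (c, b) ∈ Z → (c', b) ∈ Z → c = c'
  adm_left : ∀ b c c' : Q.A, Q.t c = Q.h b → Q.t c' = Q.h b →
    (c, b) ∉ Z → (c', b) ∉ Z → c = c'

/-- A vertex is relational if some relation `ba ∈ Z` passes through it,
i.e. `t b = v = h a`. -/
def Relational (Q : Quiv) (Z : Set (Q.A × Q.A)) (v : Q.V) : Prop :=
  ∃ b a : Q.A, (b, a) ∈ Z ∧ Q.t b = v ∧ Q.h a = v

/-- A presentation of the semilinear path algebra `K_σ Q` on a ring `Λ`: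
a `K`-ring structure `ι`, trivial paths `e v`, arrows `ar x`, the defining relations,
and freeness: the paths of `Q` (trivial and nontrivial) form a left `K`-basis. -/
structure SLPA (K : Type) [DivisionRing K] (Q : Quiv) [Fintype Q.V]
    (σ : Q.A → K ≃+* K) (Λ : Type) [Ring Λ] where
  ι : K →+* Λ
  e : Q.V → Λ
  ar : Q.A → Λ
  sum_e : (∑ v : Q.V, e v) = 1
  e_idem : ∀ v : Q.V, e v * e v = e v
  e_orth : ∀ u v : Q.V, u ≠ v → e u * e v = 0
  e_comm : ∀ (v : Q.V) (lam : K), e v * ι lam = ι lam * e v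
  he_ar : ∀ x : Q.A, e (Q.h x) * ar x = ar x
  ar_te : ∀ x : Q.A, ar x * e (Q.t x) = ar x
  semilinear : ∀ (x : Q.A) (lam : K), ar x * ι lam = ι (σ x lam) * ar x
  free : Function.Bijective
    (fun c : (Q.V ⊕ {p : List Q.A // p ≠ [] ∧ Q.IsPath p}) →₀ K =>
      c.sum fun p lam => ι lam * Sum.elim e (fun q => (q.1.map ar).prod) p)

/-- A presentation of the tensor ring `T_R(M)` where `R = K^{Q₀}` (the product ring) and
`M = K^{Q₁}` is the `R`-`R`-bimodule with left action `(λ_v)(μ_a) = (λ_{h(a)} μ_a)` and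
right action twisted by σ: `(μ_a)(η_v) = (μ_a σ_a(η_{t(a)}))`.  The presentation records
the structure maps `ρ : R → T`, `μ : M → T` satisfying the bimodule compatibilities, and
the universal property of the tensor ring. -/
structure TensorRingOver (K : Type) [DivisionRing K] (Q : Quiv)
    (σ : Q.A → K ≃+* K) (T : Type) [Ring T] where
  ρ : (Q.V → K) →+* T
  μ : (Q.A → K) →+ T
  left_compat : ∀ (r : Q.V → K) (m : Q.A → K),
    μ (fun x => r (Q.h x) * m x) = ρ r * μ m
  right_compat : ∀ (m : Q.A → K) (r : Q.V → K),
    μ (fun x => m x * σ x (r (Q.t x))) = μ m * ρ r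
  universal : ∀ (C : Type) [Ring C], ∀ (ρ' : (Q.V → K) →+* C) (μ' : (Q.A → K) →+ C),
    (∀ (r : Q.V → K) (m : Q.A → K), μ' (fun x => r (Q.h x) * m x) = ρ' r * μ' m) →
    (∀ (m : Q.A → K) (r : Q.V → K), μ' (fun x => m x * σ x (r (Q.t x))) = μ' m * ρ' r) →
    ∃! f : T →+* C, (∀ r, f (ρ r) = ρ' r) ∧ (∀ m, f (μ m) = μ' m)

section Aux


variable {K : Type} [DivisionRing K] {Q : Quiv} [Fintype Q.V]

/-- Abstract system of elements satisfying the path-algebra relations. -/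
structure Sys (σ : Q.A → K ≃+* K) (A : Type) [Ring A] where
  i : K →+* A
  E : Q.V → A
  X : Q.A → A
  sumE : (∑ v : Q.V, E v) = 1
  EE : ∀ u v, E u * E v = if u = v then E u else 0
  EX : ∀ u x, E u * X x = if u = Q.h x then X x else 0
  XE : ∀ x v, X x * E v = if v = Q.t x then X x else 0
  Xi : ∀ x lam, X x * i lam = i (σ x lam) * X x
  Ei : ∀ v lam, E v * i lam = i lam * E v

variable {σ : Q.A → K ≃+* K} {A : Type} [Ring A]

abbrev PathSub (Q : Quiv) := {p : List Q.A // p ≠ [] ∧ Q.IsPath p}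
abbrev Bas (Q : Quiv) := Q.V ⊕ PathSub Q

/-- Twist automorphism of a basis element. -/
noncomputable def tw (σ : Q.A → K ≃+* K) : Bas Q → RingAut K :=
  Sum.elim (fun _ => 1) (fun q => (q.1.map (fun a => (σ a : RingAut K))).prod)

/-- Realization of a basis element in a system. -/
def bS (s : Sys σ A) : Bas Q → A :=
  Sum.elim s.E (fun q => (q.1.map s.X).prod)

lemma P_i (s : Sys σ A) : ∀ (p : List Q.A) (lam : K),
    (p.map s.X).prod * s.i lam
      = s.i (((p.map (fun a => (σ a : RingAut K))).prod : RingAut K) lam) * (p.map s.X).prod := by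
  intro p
  induction p with
  | nil => intro lam; simp
  | cons a p ih =>
    intro lam
    simp only [List.map_cons, List.prod_cons]
    calc s.X a * (List.map s.X p).prod * s.i lam
        = s.X a * ((List.map s.X p).prod * s.i lam) := by rw [mul_assoc]
      _ = s.X a * (s.i (((p.map (fun a => (σ a : RingAut K))).prod : RingAut K) lam)
            * (List.map s.X p).prod) := by rw [ih]
      _ = (s.X a * s.i (((p.map (fun a => (σ a : RingAut K))).prod : RingAut K) lam))
            * (List.map s.X p).prod := by rw [mul_assoc]
      _ = s.i (σ a (((p.map (fun a => (σ a : RingAut K))).prod : RingAut K) lam)) * s.X a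
            * (List.map s.X p).prod := by rw [s.Xi]
      _ = s.i ((((σ a : RingAut K) * (p.map (fun a => (σ a : RingAut K))).prod : RingAut K)) lam)
            * (s.X a * (List.map s.X p).prod) := by rw [mul_assoc]; rfl

lemma E_P (s : Sys σ A) (u : Q.V) (p : List Q.A) (hp : p ≠ []) :
    s.E u * (p.map s.X).prod
      = if u = Q.h (p.head hp) then (p.map s.X).prod else 0 := by
  cases p with
  | nil => exact absurd rfl hp
  | cons a p =>
    simp only [List.map_cons, List.prod_cons, ← mul_assoc, s.EX, List.head]
    split <;> simp

lemma P_E (s : Sys σ A) : ∀ (p : List Q.A) (hp : p ≠ []) (v : Q.V),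
    (p.map s.X).prod * s.E v
      = if v = Q.t (p.getLast hp) then (p.map s.X).prod else 0 := by
  intro p
  induction p with
  | nil => intro hp; exact absurd rfl hp
  | cons a p ih =>
    intro hp v
    cases p with
    | nil => simp [s.XE]
    | cons b p =>
      have hbp : (b :: p) ≠ [] := by simp
      have hlast : (a :: b :: p).getLast hp = (b :: p).getLast hbp := by
        rw [List.getLast_cons hbp]
      rw [List.map_cons, List.prod_cons, mul_assoc, ih hbp v, hlast]
      split <;> simp

lemma P_P_zero (s : Sys σ A) (p q : List Q.A) (hp : p ≠ []) (hq : q ≠ [])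
    (h : Q.t (p.getLast hp) ≠ Q.h (q.head hq)) :
    (p.map s.X).prod * (q.map s.X).prod = 0 := by
  have h1 : (p.map s.X).prod = (p.map s.X).prod * s.E (Q.t (p.getLast hp)) := by
    rw [P_E s p hp, if_pos rfl]
  rw [h1, mul_assoc, E_P s _ q hq, if_neg h, mul_zero]

lemma bS_i (s : Sys σ A) (b : Bas Q) (lam : K) :
    bS s b * s.i lam = s.i (tw σ b lam) * bS s b := by
  cases b with
  | inl v => exact s.Ei v lam
  | inr q => exact P_i s q.1 lam

lemma key (σ : Q.A → K ≃+* K) (b b' : Bas Q) :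
    (∀ (A : Type) [Ring A] (s : Sys σ A), bS s b * bS s b' = 0) ∨
    (∃ b'' : Bas Q, ∀ (A : Type) [Ring A] (s : Sys σ A), bS s b * bS s b' = bS s b'') := by
  cases b with
  | inl u =>
    cases b' with
    | inl v =>
      by_cases h : u = v
      · subst h
        exact Or.inr ⟨Sum.inl u, fun A _ s => by simp [bS, s.EE]⟩
      · exact Or.inl (fun A _ s => by simp [bS, s.EE, h])
    | inr q =>
      by_cases h : u = Q.h (q.1.head q.2.1)
      · exact Or.inr ⟨Sum.inr q, fun A _ s => by
          simpa [bS] using (by rw [E_P s u q.1 q.2.1, if_pos h])⟩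
      · exact Or.inl (fun A _ s => by
          simpa [bS] using (by rw [E_P s u q.1 q.2.1, if_neg h]))
  | inr q =>
    cases b' with
    | inl v =>
      by_cases h : v = Q.t (q.1.getLast q.2.1)
      · exact Or.inr ⟨Sum.inr q, fun A _ s => by
          simpa [bS] using (by rw [P_E s q.1 q.2.1 v, if_pos h])⟩
      · exact Or.inl (fun A _ s => by
          simpa [bS] using (by rw [P_E s q.1 q.2.1 v, if_neg h]))
    | inr q' =>
      by_cases h : Q.t (q.1.getLast q.2.1) = Q.h (q'.1.head q'.2.1)
      · refine Or.inr ⟨Sum.inr ⟨q.1 ++ q'.1, ?_, ?_⟩, fun A _ s => by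
          simp [bS, List.map_append]⟩
        · simp [q.2.1]
        · refine List.IsChain.append q.2.2 q'.2.2 ?_
          rw [List.getLast?_eq_getLast q.2.1, List.head?_eq_head q'.2.1]
          simpa using h
      · exact Or.inl (fun A _ s => P_P_zero s q.1 q'.1 q.2.1 q'.2.1 h)

noncomputable def Fs (s : Sys σ A) (c : Bas Q →₀ K) : A :=
  c.sum fun b lam => s.i lam * bS s b

lemma Fs_single (s : Sys σ A) (b : Bas Q) (lam : K) :
    Fs s (Finsupp.single b lam) = s.i lam * bS s b :=
  Finsupp.sum_single_index (by simp)

lemma Fs_add (s : Sys σ A) (c d : Bas Q →₀ K) : Fs s (c + d) = Fs s c + Fs s d :=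
  Finsupp.sum_add_index' (by simp) (fun b l1 l2 => by rw [map_add, add_mul])

lemma Fs_zero (s : Sys σ A) : Fs s 0 = 0 := Finsupp.sum_zero_index

noncomputable def FsHom (s : Sys σ A) : (Bas Q →₀ K) →+ A :=
  AddMonoidHom.mk' (Fs s) (Fs_add s)

noncomputable def cOne : Bas Q →₀ K := ∑ v : Q.V, Finsupp.single (Sum.inl v) (1 : K)

lemma Fs_one (s : Sys σ A) : Fs s (cOne (K := K) (Q := Q)) = 1 := by
  have : Fs s (cOne (K := K) (Q := Q)) = FsHom s (∑ v : Q.V, Finsupp.single (Sum.inl v) (1 : K)) := rfl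
  rw [this, map_sum]
  have : ∀ v : Q.V, FsHom s (Finsupp.single (Sum.inl v) (1 : K)) = s.E v := by
    intro v
    show Fs s _ = _
    rw [Fs_single, map_one, one_mul]; rfl
  simp only [this, s.sumE]

lemma Fs_mul_expand (s : Sys σ A) (c d : Bas Q →₀ K) :
    Fs s c * Fs s d = ∑ b ∈ c.support, ∑ b' ∈ d.support,
      (s.i (c b) * bS s b) * (s.i (d b') * bS s b') := by
  rw [Fs, Fs, Finsupp.sum, Finsupp.sum, Finset.sum_mul_sum]

lemma Fs_term_mul (s : Sys σ A) (b b' : Bas Q) (lam mu : K) :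
    (s.i lam * bS s b) * (s.i mu * bS s b')
      = s.i (lam * tw σ b mu) * (bS s b * bS s b') := by
  calc (s.i lam * bS s b) * (s.i mu * bS s b')
      = s.i lam * ((bS s b * s.i mu) * bS s b') := by
        simp only [mul_assoc]
    _ = s.i lam * ((s.i (tw σ b mu) * bS s b) * bS s b') := by rw [bS_i]
    _ = s.i (lam * tw σ b mu) * (bS s b * bS s b') := by
        simp only [map_mul, mul_assoc]

end Aux

set_option linter.unusedSectionVars false

section Rho
variable {K : Type} [DivisionRing K] {Q : Quiv} [Fintype Q.V] [Fintype Q.A]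
variable {σ : Q.A → K ≃+* K} {A : Type} [Ring A]

lemma bS_inl (s : Sys σ A) (v : Q.V) : bS s (Sum.inl v) = s.E v := rfl

lemma bS_inr (s : Sys σ A) (q : PathSub Q) : bS s (Sum.inr q) = (q.1.map s.X).prod := rfl

noncomputable def rhoS (s : Sys σ A) : (Q.V → K) →+* A where
  toFun r := ∑ v : Q.V, s.i (r v) * s.E v
  map_one' := by simp [s.sumE]
  map_zero' := by simp
  map_add' r r' := by simp [map_add, add_mul, Finset.sum_add_distrib]
  map_mul' r r' := by
    rw [Finset.sum_mul_sum]
    have key : ∀ u v : Q.V, (s.i (r u) * s.E u) * (s.i (r' v) * s.E v)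
        = if u = v then s.i (r u * r' u) * s.E u else 0 := by
      intro u v
      calc (s.i (r u) * s.E u) * (s.i (r' v) * s.E v)
          = s.i (r u) * ((s.E u * s.i (r' v)) * s.E v) := by simp only [mul_assoc]
        _ = s.i (r u) * (s.i (r' v) * (s.E u * s.E v)) := by rw [s.Ei, mul_assoc]
        _ = s.i (r u * r' v) * (s.E u * s.E v) := by rw [map_mul, mul_assoc]
        _ = _ := by
            rw [s.EE]
            by_cases h : u = v
            · subst h; simp
            · simp [h]
    simp only [key, Finset.sum_ite_eq, Finset.mem_univ, if_true]
    rfl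

lemma rhoS_apply (s : Sys σ A) (r : Q.V → K) :
    rhoS s r = ∑ v : Q.V, s.i (r v) * s.E v := rfl

lemma rhoS_const (s : Sys σ A) (lam : K) : rhoS s (fun _ => lam) = s.i lam := by
  rw [rhoS_apply, ← Finset.mul_sum, s.sumE, mul_one]

lemma rhoS_delta (s : Sys σ A) (v : Q.V) :
    rhoS s (fun u => if u = v then 1 else 0) = s.E v := by
  rw [rhoS_apply]
  have : ∀ u : Q.V, s.i (if u = v then (1:K) else 0) * s.E u
      = if u = v then s.E u else 0 := by
    intro u; by_cases h : u = v <;> simp [h]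
  simp only [this]
  rw [Finset.sum_ite_eq' Finset.univ v s.E]
  simp

noncomputable def muS (s : Sys σ A) : (Q.A → K) →+ A where
  toFun m := ∑ x : Q.A, s.i (m x) * s.X x
  map_zero' := by simp
  map_add' m m' := by simp [map_add, add_mul, Finset.sum_add_distrib]

lemma muS_apply (s : Sys σ A) (m : Q.A → K) :
    muS s m = ∑ x : Q.A, s.i (m x) * s.X x := rfl

lemma muS_delta (s : Sys σ A) (x : Q.A) :
    muS s (fun y => if y = x then 1 else 0) = s.X x := by
  rw [muS_apply]
  have : ∀ y : Q.A, s.i (if y = x then (1:K) else 0) * s.X y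
      = if y = x then s.X y else 0 := by
    intro y; by_cases h : y = x <;> simp [h]
  simp only [this]
  rw [Finset.sum_ite_eq' Finset.univ x s.X]
  simp

lemma muS_left (s : Sys σ A) (r : Q.V → K) (m : Q.A → K) :
    muS s (fun x => r (Q.h x) * m x) = rhoS s r * muS s m := by
  rw [muS_apply, rhoS_apply, muS_apply, Finset.sum_mul_sum]
  have key : ∀ (v : Q.V) (x : Q.A), (s.i (r v) * s.E v) * (s.i (m x) * s.X x)
      = if v = Q.h x then s.i (r v * m x) * s.X x else 0 := by
    intro v x
    calc (s.i (r v) * s.E v) * (s.i (m x) * s.X x)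
        = s.i (r v) * ((s.E v * s.i (m x)) * s.X x) := by simp only [mul_assoc]
      _ = s.i (r v) * (s.i (m x) * (s.E v * s.X x)) := by rw [s.Ei, mul_assoc]
      _ = s.i (r v * m x) * (s.E v * s.X x) := by rw [map_mul, mul_assoc]
      _ = _ := by
          rw [s.EX]
          by_cases h : v = Q.h x
          · simp [h]
          · simp [h]
  simp only [key]
  rw [Finset.sum_comm]
  refine Finset.sum_congr rfl fun x _ => ?_
  rw [Finset.sum_ite_eq' Finset.univ (Q.h x) (fun v => s.i (r v * m x) * s.X x)]
  simp

lemma muS_right (s : Sys σ A) (m : Q.A → K) (r : Q.V → K) :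
    muS s (fun x => m x * σ x (r (Q.t x))) = muS s m * rhoS s r := by
  rw [muS_apply, rhoS_apply, muS_apply, Finset.sum_mul_sum]
  have key : ∀ (x : Q.A) (v : Q.V), (s.i (m x) * s.X x) * (s.i (r v) * s.E v)
      = if v = Q.t x then s.i (m x * σ x (r v)) * s.X x else 0 := by
    intro x v
    calc (s.i (m x) * s.X x) * (s.i (r v) * s.E v)
        = s.i (m x) * ((s.X x * s.i (r v)) * s.E v) := by simp only [mul_assoc]
      _ = s.i (m x) * (s.i (σ x (r v)) * (s.X x * s.E v)) := by rw [s.Xi, mul_assoc]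
      _ = s.i (m x * σ x (r v)) * (s.X x * s.E v) := by rw [map_mul, mul_assoc]
      _ = _ := by
          rw [s.XE]
          by_cases h : v = Q.t x
          · simp [h]
          · simp [h]
  simp only [key]
  refine Finset.sum_congr rfl fun x _ => ?_
  rw [Finset.sum_ite_eq' Finset.univ (Q.t x) (fun v => s.i (m x * σ x (r v)) * s.X x)]
  simp

end Rho

section Sysdefs
variable {K : Type} [DivisionRing K] {Q : Quiv} [Fintype Q.V] {σ : Q.A → K ≃+* K}

noncomputable def sysSLPA {Λ : Type} [Ring Λ] (S : SLPA K Q σ Λ) : Sys σ Λ where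
  i := S.ι
  E := S.e
  X := S.ar
  sumE := S.sum_e
  EE := fun u v => by
    by_cases h : u = v
    · subst h; rw [if_pos rfl, S.e_idem]
    · rw [if_neg h, S.e_orth u v h]
  EX := fun u x => by
    by_cases h : u = Q.h x
    · subst h; rw [if_pos rfl, S.he_ar]
    · rw [if_neg h, ← S.he_ar x, ← mul_assoc, S.e_orth u (Q.h x) h, zero_mul]
  XE := fun x v => by
    by_cases h : v = Q.t x
    · subst h; rw [if_pos rfl, S.ar_te]
    · rw [if_neg h, ← S.ar_te x, mul_assoc, S.e_orth (Q.t x) v (fun hh => h hh.symm), mul_zero]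
  Xi := S.semilinear
  Ei := S.e_comm

noncomputable def sysTR {T : Type} [Ring T] (Tr : TensorRingOver K Q σ T) : Sys σ T where
  i := Tr.ρ.comp (Pi.constRingHom Q.V K)
  E := fun v => Tr.ρ (fun u => if u = v then 1 else 0)
  X := fun x => Tr.μ (fun y => if y = x then 1 else 0)
  sumE := by
    rw [← map_sum]
    have : (∑ v : Q.V, fun u => if u = v then (1:K) else 0) = 1 := by
      funext u
      rw [Finset.sum_apply]
      simp [Finset.sum_ite_eq]
    rw [this, map_one]
  EE := fun u v => by
    rw [← map_mul]
    have : ((fun u' => if u' = u then (1:K) else 0) * fun u' => if u' = v then 1 else 0)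
        = if u = v then (fun u' => if u' = u then (1:K) else 0) else 0 := by
      by_cases h : u = v
      · subst h; rw [if_pos rfl]; funext w; by_cases hw : w = u <;> simp [Pi.mul_apply, hw]
      · rw [if_neg h]; funext w
        by_cases hw : w = u
        · subst hw; simp [Pi.mul_apply, h]
        · simp [Pi.mul_apply, hw]
    rw [this, apply_ite Tr.ρ, map_zero]
  EX := fun u x => by
    rw [← Tr.left_compat]
    have : (fun y => (if Q.h y = u then (1:K) else 0) * (if y = x then 1 else 0))
        = if u = Q.h x then (fun y => if y = x then (1:K) else 0) else 0 := by
      funext y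
      by_cases hy : y = x
      · subst hy
        by_cases h : u = Q.h y <;> simp [h, eq_comm]
      · by_cases h : u = Q.h x <;> simp [hy, h]
    rw [this, apply_ite Tr.μ, map_zero]
  XE := fun x v => by
    rw [← Tr.right_compat]
    have : (fun y => (if y = x then (1:K) else 0) * σ y (if Q.t y = v then 1 else 0))
        = if v = Q.t x then (fun y => if y = x then (1:K) else 0) else 0 := by
      funext y
      by_cases hy : y = x
      · subst hy
        rw [apply_ite (σ y), map_one, map_zero]
        by_cases h : v = Q.t y <;> simp [h, eq_comm]
      · by_cases h : v = Q.t x <;> simp [hy, h]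
    rw [this, apply_ite Tr.μ, map_zero]
  Xi := fun x lam => by
    show Tr.μ _ * Tr.ρ (fun _ => lam) = Tr.ρ (fun _ => σ x lam) * Tr.μ _
    rw [← Tr.right_compat, ← Tr.left_compat]
    congr 1
    funext y
    by_cases hy : y = x
    · subst hy; simp
    · simp [hy]
  Ei := fun v lam => by
    show Tr.ρ _ * Tr.ρ (fun _ => lam) = Tr.ρ (fun _ => lam) * Tr.ρ _
    rw [← map_mul, ← map_mul]
    congr 1
    funext w
    by_cases hw : w = v <;> simp [Pi.mul_apply, hw]

end Sysdefs

/-- The semilinear path algebra `K_σ Q` is isomorphic as a `K`-ring to the tensor ring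
`T_R(M)` with `R = K^{Q₀}`, `M = K^{Q₁}` twisted by `σ`, via trivial paths `↦` indicator
idempotents, `K ↦` constant tuples, and paths `↦` pure tensors of indicator elements. -/
theorem stmt13 (K : Type) [DivisionRing K] (Q : Quiv) [Fintype Q.V] [Finite Q.A]
    (σ : Q.A → K ≃+* K) (Λ : Type) [Ring Λ] (S : SLPA K Q σ Λ)
    (T : Type) [Ring T] (Tr : TensorRingOver K Q σ T) :
    ∃ φ : Λ ≃+* T,
      (∀ lam : K, φ (S.ι lam) = Tr.ρ (fun _ => lam)) ∧
      (∀ v : Q.V, φ (S.e v) = Tr.ρ (fun u => if u = v then 1 else 0)) ∧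
      (∀ x : Q.A, φ (S.ar x) = Tr.μ (fun y => if y = x then 1 else 0)) ∧
      (∀ p : List Q.A, p ≠ [] → Q.IsPath p →
        φ ((p.map S.ar).prod) =
          (p.map (fun x => Tr.μ (fun y => if y = x then 1 else 0))).prod) := by
  classical
  letI : Fintype Q.A := Fintype.ofFinite Q.A
  let sL : Sys σ Λ := sysSLPA S
  let sT : Sys σ T := sysTR Tr
  -- the free map of S is Fs sL
  have hfree : Function.Bijective (Fs sL) := S.free
  let eF : (Bas Q →₀ K) ≃ Λ := Equiv.ofBijective (Fs sL) hfree
  let H : Λ → T := fun z => Fs sT (eF.symm z)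
  have hHF : ∀ c, H (Fs sL c) = Fs sT c := fun c => congrArg (Fs sT) (eF.symm_apply_apply c)
  have hsurj : ∀ z : Λ, Fs sL (eF.symm z) = z := fun z => eF.apply_symm_apply z
  have Hadd : ∀ x y : Λ, H (x + y) = H x + H y := by
    intro x y
    obtain ⟨c, rfl⟩ : ∃ c, Fs sL c = x := ⟨eF.symm x, hsurj x⟩
    obtain ⟨d, rfl⟩ : ∃ d, Fs sL d = y := ⟨eF.symm y, hsurj y⟩
    rw [← Fs_add, hHF, hHF, hHF, Fs_add]
  have H0 : H 0 = 0 := by rw [← Fs_zero sL, hHF, Fs_zero]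
  let Hhom : Λ →+ T := AddMonoidHom.mk' H Hadd
  have hHsingle : ∀ (b : Bas Q) (lam : K),
      H (sL.i lam * bS sL b) = sT.i lam * bS sT b := by
    intro b lam
    rw [← Fs_single sL b lam, hHF, Fs_single]
  have hterm : ∀ (b b' : Bas Q) (lam mu : K),
      H ((sL.i lam * bS sL b) * (sL.i mu * bS sL b'))
        = (sT.i lam * bS sT b) * (sT.i mu * bS sT b') := by
    intro b b' lam mu
    rw [Fs_term_mul sL, Fs_term_mul sT]
    rcases key σ b b' with hz | ⟨b'', hb''⟩
    · rw [hz Λ sL, hz T sT, mul_zero, mul_zero, H0]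
    · rw [hb'' Λ sL, hb'' T sT, hHsingle]
  have hmul : ∀ x y : Λ, H (x * y) = H x * H y := by
    intro x y
    obtain ⟨c, rfl⟩ : ∃ c, Fs sL c = x := ⟨eF.symm x, hsurj x⟩
    obtain ⟨d, rfl⟩ : ∃ d, Fs sL d = y := ⟨eF.symm y, hsurj y⟩
    rw [hHF, hHF]
    calc H (Fs sL c * Fs sL d)
        = Hhom (∑ b ∈ c.support, ∑ b' ∈ d.support,
            (sL.i (c b) * bS sL b) * (sL.i (d b') * bS sL b')) := by
          rw [Fs_mul_expand]; rfl
      _ = ∑ b ∈ c.support, ∑ b' ∈ d.support,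
            H ((sL.i (c b) * bS sL b) * (sL.i (d b') * bS sL b')) := by
          rw [map_sum]
          exact Finset.sum_congr rfl fun b _ => map_sum Hhom _ _
      _ = ∑ b ∈ c.support, ∑ b' ∈ d.support,
            (sT.i (c b) * bS sT b) * (sT.i (d b') * bS sT b') := by
          exact Finset.sum_congr rfl fun b _ => Finset.sum_congr rfl fun b' _ =>
            hterm b b' (c b) (d b')
      _ = Fs sT c * Fs sT d := (Fs_mul_expand sT c d).symm
  have hone : H 1 = 1 := by rw [← Fs_one sL, hHF, Fs_one]
  let Hring : Λ →+* T :=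
    { toFun := H, map_one' := hone, map_mul' := hmul, map_zero' := H0, map_add' := Hadd }
  -- the inverse via the universal property
  obtain ⟨ψ, ⟨hψρ, hψμ⟩, -⟩ :=
    Tr.universal Λ (rhoS sL) (muS sL) (muS_left sL) (muS_right sL)
  -- identification of rhoS sT / muS sT with Tr.ρ / Tr.μ
  have hrhoT : ∀ r, rhoS sT r = Tr.ρ r := by
    intro r
    have h1 : ∀ v : Q.V, sT.i (r v) * sT.E v
        = Tr.ρ (fun u => if u = v then r v else 0) := by
      intro v
      show Tr.ρ _ * Tr.ρ _ = _
      rw [← map_mul]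
      congr 1
      funext u
      by_cases h : u = v <;> simp [Pi.mul_apply, h]
    rw [rhoS_apply]
    simp only [h1, ← map_sum]
    congr 1
    funext u
    rw [Finset.sum_apply]
    simp [Finset.sum_ite_eq']
  have hmuT : ∀ m, muS sT m = Tr.μ m := by
    intro m
    have h1 : ∀ x : Q.A, sT.i (m x) * sT.X x
        = Tr.μ (fun y => if y = x then m x else 0) := by
      intro x
      have h2 := Tr.left_compat (fun _ => m x) (fun y => if y = x then (1:K) else 0)
      have h3 : (fun y => m x * if y = x then (1:K) else 0)
          = fun y => if y = x then m x else 0 := by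
        funext y; by_cases h : y = x <;> simp [h]
      show Tr.ρ (fun _ => m x) * Tr.μ (fun y => if y = x then (1:K) else 0)
        = Tr.μ (fun y => if y = x then m x else 0)
      rw [← h2, h3]
    rw [muS_apply]
    simp only [h1, ← map_sum]
    congr 1
    funext y
    rw [Finset.sum_apply]
    simp [Finset.sum_ite_eq']
  -- H sends the generic generators of Λ to those of T
  have hHrho : ∀ r, H (rhoS sL r) = rhoS sT r := by
    intro r
    show Hhom (∑ v : Q.V, sL.i (r v) * sL.E v) = ∑ v : Q.V, sT.i (r v) * sT.E v
    rw [map_sum]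
    exact Finset.sum_congr rfl fun v _ => hHsingle (Sum.inl v) (r v)
  have hsX : ∀ x : Q.A, (Sum.inr ⟨[x], by simp, List.isChain_singleton x⟩ : Bas Q) = Sum.inr ⟨[x], by simp, List.isChain_singleton x⟩ := fun _ => rfl
  have hHX : ∀ (x : Q.A) (lam : K), H (sL.i lam * sL.X x) = sT.i lam * sT.X x := by
    intro x lam
    have h1 := hHsingle (Sum.inr ⟨[x], by simp, List.isChain_singleton x⟩) lam
    simpa [bS] using h1
  have hHmu : ∀ m, H (muS sL m) = muS sT m := by
    intro m
    show Hhom (∑ x : Q.A, sL.i (m x) * sL.X x) = ∑ x : Q.A, sT.i (m x) * sT.X x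
    rw [map_sum]
    exact Finset.sum_congr rfl fun x _ => hHX x (m x)
  -- ψ sends generators back
  have hψi : ∀ lam : K, ψ (sT.i lam) = sL.i lam := by
    intro lam
    show ψ (Tr.ρ _) = _
    rw [hψρ]
    exact rhoS_const sL lam
  have hψb : ∀ b : Bas Q, ψ (bS sT b) = bS sL b := by
    intro b
    cases b with
    | inl v =>
      show ψ (Tr.ρ _) = _
      rw [hψρ]
      exact rhoS_delta sL v
    | inr q =>
      show ψ ((q.1.map sT.X).prod) = (q.1.map sL.X).prod
      rw [map_list_prod, List.map_map]
      have h1 : (⇑ψ ∘ sT.X) = sL.X := by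
        funext x
        show ψ (Tr.μ _) = _
        rw [hψμ]
        exact muS_delta sL x
      rw [h1]
  -- left inverse
  have hψH : ∀ z : Λ, ψ (H z) = z := by
    intro z
    obtain ⟨c, rfl⟩ : ∃ c, Fs sL c = z := ⟨eF.symm z, hsurj z⟩
    rw [hHF]
    show ψ (c.sum fun b lam => sT.i lam * bS sT b) = c.sum fun b lam => sL.i lam * bS sL b
    rw [map_finsuppSum]
    exact Finsupp.sum_congr fun b _ => by rw [map_mul, hψi, hψb]
  -- right inverse via uniqueness
  obtain ⟨f0, -, huniq⟩ := Tr.universal T Tr.ρ Tr.μ Tr.left_compat Tr.right_compat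
  have hid : RingHom.id T = f0 := huniq _ ⟨fun r => rfl, fun m => rfl⟩
  have hcomp : Hring.comp ψ = f0 := by
    refine huniq _ ⟨fun r => ?_, fun m => ?_⟩
    · show H (ψ (Tr.ρ r)) = Tr.ρ r
      rw [hψρ, hHrho, hrhoT]
    · show H (ψ (Tr.μ m)) = Tr.μ m
      rw [hψμ, hHmu, hmuT]
  have hHψ : ∀ z : T, H (ψ z) = z := by
    intro z
    have := congrArg (fun f : T →+* T => f z) (hcomp.trans hid.symm)
    exact this
  -- assemble the equivalence
  refine ⟨{ toFun := H, invFun := ψ, left_inv := hψH, right_inv := hHψ,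
            map_mul' := hmul, map_add' := Hadd }, ?_, ?_, ?_, ?_⟩
  · intro lam
    show H (S.ι lam) = Tr.ρ (fun _ => lam)
    have : S.ι lam = rhoS sL (fun _ => lam) := (rhoS_const sL lam).symm
    rw [this, hHrho, hrhoT]
  · intro v
    show H (S.e v) = Tr.ρ (fun u => if u = v then 1 else 0)
    have : S.e v = rhoS sL (fun u => if u = v then 1 else 0) := (rhoS_delta sL v).symm
    rw [this, hHrho, hrhoT]
  · intro x
    show H (S.ar x) = Tr.μ (fun y => if y = x then 1 else 0)
    have : S.ar x = muS sL (fun y => if y = x then 1 else 0) := (muS_delta sL x).symm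
    rw [this, hHmu, hmuT]
  · intro p hne hpath
    show H ((p.map S.ar).prod) = _
    have hb : ∀ b : Bas Q, H (bS sL b) = bS sT b := by
      intro b
      have := hHsingle b 1
      simpa using this
    have h1 := hb (Sum.inr ⟨p, hne, hpath⟩)
    rw [bS_inr, bS_inr] at h1
    exact h1
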